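/- If the inverse multifunction (∂f)^{-1} of the subdifferential of a proper lsc convex function f is locally upper Lipschitz continuous at the origin with modulus κ, then ∂f satisfies the error bound condition: for any δ > 0 there exists κ′ > 0 such that dist(x, (∂f)^{-1}(0)) ≤ κ′·dist(0, ∂f(x)) for all x with dist(x, (∂f)^{-1}(0)) ≤ δ. -/

import Mathlib

open scoped InnerProductSpace RealInnerProductSpace

/-- Convex subdifferential of a real-valued function. -/
def convexSubdiff {n : ℕ} (f : EuclideanSpace ℝ (Fin n) → ℝ)
    (x : EuclideanSpace ℝ (Fin n)) : Set (EuclideanSpace ℝ (Fin n)) :=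
  {v | ∀ y, f x + ⟪v, y - x⟫_ℝ ≤ f y}

lemma convexSubdiff_nonempty {n : ℕ} (f : EuclideanSpace ℝ (Fin n) → ℝ)
    (hf : ConvexOn ℝ Set.univ f) (x : EuclideanSpace ℝ (Fin n)) :
    (convexSubdiff f x).Nonempty := by
  have hcont : Continuous f := by
    have h := hf.continuousOn isOpen_univ
    exact continuousOn_univ.mp h
  set S : Set (EuclideanSpace ℝ (Fin n) × ℝ) := {p | f p.1 < p.2} with hS
  have hopen : IsOpen S := isOpen_lt (hcont.comp continuous_fst) continuous_snd
  have hconv : Convex ℝ S := by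
    intro p hp q hq a b ha hb hab
    simp only [hS, Set.mem_setOf_eq] at *
    calc f (a • p.1 + b • q.1) ≤ a * f p.1 + b * f q.1 :=
          hf.2 (Set.mem_univ _) (Set.mem_univ _) ha hb hab
      _ < a * p.2 + b * q.2 := by
          rcases eq_or_lt_of_le ha with h | h
          · simp only [← h, zero_mul, zero_add]
            have hb1 : b = 1 := by linarith
            simpa [hb1] using hq
          · have h1 : a * f p.1 < a * p.2 := by exact mul_lt_mul_of_pos_left hp h
            have h2 : b * f q.1 ≤ b * q.2 := mul_le_mul_of_nonneg_left hq.le hb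
            linarith
      _ = (a • p + b • q).2 := rfl
  have hxnot : (x, f x) ∉ S := by simp [hS]
  obtain ⟨ℓ, hℓ⟩ := geometric_hahn_banach_open_point hconv hopen hxnot
  set c : ℝ := ℓ (0, 1) with hc
  have hlin : ∀ y t, ℓ (y, t) = ℓ (y, 0) + t * c := by
    intro y t
    have : (y, t) = (y, (0:ℝ)) + t • ((0 : EuclideanSpace ℝ (Fin n)), (1:ℝ)) := by
      simp [Prod.ext_iff]
    rw [this, map_add, map_smul]; ring_nf; rw [hc]; ring
  -- c < 0
  have hkey : ∀ y t, f y < t → ℓ (y, 0) + t * c < ℓ (x, 0) + f x * c := by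
    intro y t h
    have h2 := hℓ (y, t) h
    rw [hlin y t, hlin x (f x)] at h2
    linarith
  have hcle : c ≤ 0 := by
    by_contra h
    push_neg at h
    have h1 := hkey x (f x + 1) (by linarith)
    nlinarith
  have hcne : c ≠ 0 := by
    intro h0
    have h1 := hkey x (f x + 1) (by linarith)
    rw [h0] at h1; simp at h1
  have hcneg : c < 0 := lt_of_le_of_ne hcle hcne
  -- ℓ (y,0) = ⟪u, y⟫
  obtain ⟨u, hu⟩ := (InnerProductSpace.toDual ℝ (EuclideanSpace ℝ (Fin n))).surjective
    ((ℓ.comp (ContinuousLinearMap.inl ℝ _ ℝ)))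
  have huy : ∀ y, ⟪u, y⟫_ℝ = ℓ (y, 0) := by
    intro y
    have := congrArg (fun g => g y) hu
    simpa [InnerProductSpace.toDual] using this
  refine ⟨(-c)⁻¹ • u, fun y => ?_⟩
  have hle : ℓ (y, 0) + f y * c ≤ ℓ (x, 0) + f x * c := by
    have : ∀ s : ℝ, 0 < s → ℓ (y, 0) + (f y + s) * c < ℓ (x, 0) + f x * c := by
      intro s hs; exact hkey y (f y + s) (by linarith)
    by_contra h
    push_neg at h
    set A := ℓ (y, 0) + f y * c - (ℓ (x, 0) + f x * c) with hA
    have hs : 0 < A / (-c) := div_pos (by linarith) (by linarith)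
    have h2 := this _ hs
    have hAc : A / (-c) * c = -A := by
      field_simp [hcne]
    rw [add_mul, hAc] at h2
    linarith
  have hinner : ⟪(-c)⁻¹ • u, y - x⟫_ℝ = (-c)⁻¹ * (ℓ (y,0) - ℓ (x,0)) := by
    rw [real_inner_smul_left, inner_sub_right, huy, huy]
  rw [hinner]
  have hcpos : 0 < -c := by linarith
  have h1 : ℓ (y, 0) - ℓ (x, 0) ≤ f x * c - f y * c := by linarith
  have h2 : (-c)⁻¹ * (ℓ (y, 0) - ℓ (x, 0)) ≤ (-c)⁻¹ * (f x * c - f y * c) :=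
    mul_le_mul_of_nonneg_left h1 (by positivity)
  have h3 : (-c)⁻¹ * (f x * c - f y * c) = f y - f x := by
    field_simp
    ring
  linarith

lemma convexSubdiff_isClosed {n : ℕ} (f : EuclideanSpace ℝ (Fin n) → ℝ)
    (x : EuclideanSpace ℝ (Fin n)) : IsClosed (convexSubdiff f x) := by
  have : convexSubdiff f x = ⋂ y, {v | f x + ⟪v, y - x⟫_ℝ ≤ f y} := by
    ext v; simp [convexSubdiff]
  rw [this]
  refine isClosed_iInter fun y => isClosed_le ?_ continuous_const
  exact continuous_const.add ((continuous_id.inner continuous_const))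

/-- if `(∂f)⁻¹` is locally upper Lipschitz at the origin with modulus
`κ`, then `∂f` satisfies the error bound condition. -/
theorem upper_lipschitz_inverse_implies_error_bound {n : ℕ}
    (f : EuclideanSpace ℝ (Fin n) → ℝ)
    (hf_conv : ConvexOn ℝ Set.univ f) (hf_lsc : LowerSemicontinuous f)
    (κ : ℝ) (hκ : 0 ≤ κ) (ε : ℝ) (hε : 0 < ε)
    (hupper : ∀ v : EuclideanSpace ℝ (Fin n), ‖v‖ ≤ ε →
      {x | v ∈ convexSubdiff f x} ⊆
        {x | ∃ z, (0 : EuclideanSpace ℝ (Fin n)) ∈ convexSubdiff f z ∧ ‖x - z‖ ≤ κ * ‖v‖}) :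
    ∀ δ > (0 : ℝ), ∃ κ' > (0 : ℝ), ∀ x : EuclideanSpace ℝ (Fin n),
      Metric.infDist x {z | (0 : EuclideanSpace ℝ (Fin n)) ∈ convexSubdiff f z} ≤ δ →
      Metric.infDist x {z | (0 : EuclideanSpace ℝ (Fin n)) ∈ convexSubdiff f z} ≤
        κ' * Metric.infDist 0 (convexSubdiff f x) := by
  intro δ hδ
  refine ⟨2 * κ + 2 * δ / ε + 1, by positivity, fun x hx => ?_⟩
  set S := {z | (0 : EuclideanSpace ℝ (Fin n)) ∈ convexSubdiff f z} with hSdef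
  set d := Metric.infDist 0 (convexSubdiff f x) with hd
  have hd0 : 0 ≤ d := Metric.infDist_nonneg
  have hne := convexSubdiff_nonempty f hf_conv x
  rcases eq_or_lt_of_le hd0 with h0 | hpos
  · have hmem : (0 : EuclideanSpace ℝ (Fin n)) ∈ convexSubdiff f x :=
      ((convexSubdiff_isClosed f x).mem_iff_infDist_zero hne).2 h0.symm
    have hxS : x ∈ S := hmem
    have : Metric.infDist x S = 0 := Metric.infDist_zero_of_mem hxS
    rw [this, ← h0]
    simp
  · by_cases hcase : 2 * d ≤ ε
    · obtain ⟨v, hv, hvd⟩ := (Metric.infDist_lt_iff hne).1 (show d < 2 * d by linarith)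
      have hvn : ‖v‖ < 2 * d := by rwa [dist_zero_left] at hvd
      obtain ⟨z, hz0, hxz⟩ := hupper v (le_trans hvn.le hcase) hv
      have h1 : Metric.infDist x S ≤ dist x z := Metric.infDist_le_dist_of_mem hz0
      rw [dist_eq_norm] at h1
      have h2 : κ * ‖v‖ ≤ κ * (2 * d) := mul_le_mul_of_nonneg_left hvn.le hκ
      have h3 : 0 ≤ 2 * δ / ε * d := mul_nonneg (by positivity) hd0
      nlinarith
    · push_neg at hcase
      have h1 : δ ≤ 2 * δ / ε * d := by
        have h2 : 2 * δ / ε * (ε / 2) ≤ 2 * δ / ε * d := by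
          apply mul_le_mul_of_nonneg_left (by linarith) (by positivity)
        have h3 : 2 * δ / ε * (ε / 2) = δ := by field_simp
        linarith
      nlinarith
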